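/- Let d be a positive integer, ρ ≥ 1, and Φ_{d,ρ} the unique positive root of ρ(x+1)^d = x^{d+1}. With μ̂ = ρ·d·(Φ_{d,ρ}+1)^{d−1} / ((d+1)·Φ_{d,ρ}^d), the function x ↦ ρ(x+1)^d − μ̂·x^{d+1} attains its maximum over x ≥ 0 at x = Φ_{d,ρ}, and this maximum value equals (1−μ̂)·Φ_{d,ρ}^{d+1}. -/

import Mathlib

theorem max_at_phi (d : ℕ) (hd : 0 < d) (ρ : ℝ) (hρ : 1 ≤ ρ)
    (Φ : ℝ) (hΦpos : 0 < Φ) (hΦ : ρ * (Φ + 1) ^ d = Φ ^ (d + 1)) :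
    let μ := ρ * d * (Φ + 1) ^ (d - 1) / (((d : ℝ) + 1) * Φ ^ d)
    (∀ x : ℝ, 0 ≤ x → ρ * (x + 1) ^ d - μ * x ^ (d + 1) ≤ ρ * (Φ + 1) ^ d - μ * Φ ^ (d + 1)) ∧
      ρ * (Φ + 1) ^ d - μ * Φ ^ (d + 1) = (1 - μ) * Φ ^ (d + 1) := by
  obtain ⟨e, rfl⟩ : ∃ e, d = e + 1 := ⟨d - 1, (Nat.succ_pred_eq_of_pos hd).symm⟩
  simp only [Nat.add_sub_cancel]
  set μ : ℝ := ρ * ↑(e + 1) * (Φ + 1) ^ e / ((↑(e + 1) + 1) * Φ ^ (e + 1)) with hμdef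
  have hρ0 : (0:ℝ) < ρ := lt_of_lt_of_le one_pos hρ
  have he1 : (0:ℝ) < (e:ℝ) + 1 := by positivity
  have hΦd : (0:ℝ) < Φ ^ (e+1) := pow_pos hΦpos _
  have hne1 : ((e:ℝ)+1) + 1 ≠ 0 := by positivity
  have hne2 : Φ ^ (e+1) ≠ 0 := ne_of_gt hΦd
  have hμ : μ * (((e:ℝ)+1) + 1) * Φ ^ (e+1) = ρ * ((e:ℝ)+1) * (Φ + 1) ^ e := by
    rw [hμdef]
    push_cast
    field_simp
  -- core strict inequality
  have core : ∀ x y : ℝ, 0 ≤ x → x < y → (y+1)^e * x^(e+1) < (x+1)^e * y^(e+1) := by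
    intro x y hx hxy
    have hy : 0 < y := lt_of_le_of_lt hx hxy
    have h1 : (y+1)*x < (x+1)*y := by nlinarith
    have h2 : ((y+1)*x)^e ≤ ((x+1)*y)^e :=
      pow_le_pow_left₀ (by positivity) h1.le _
    have h3 : (0:ℝ) < ((x+1)*y)^e := by positivity
    calc (y+1)^e * x^(e+1) = ((y+1)*x)^e * x := by rw [mul_pow, pow_succ]; ring
      _ ≤ ((x+1)*y)^e * x := by nlinarith
      _ < ((x+1)*y)^e * y := by nlinarith
      _ = (x+1)^e * y^(e+1) := by rw [mul_pow, pow_succ]; ring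
  -- the function and its derivative
  set f : ℝ → ℝ := fun x => ρ * (x + 1) ^ (e+1) - μ * x ^ (e+1+1) with hf
  set g : ℝ → ℝ := fun x => ρ * ((e:ℝ)+1) * (x+1)^e - μ * (((e:ℝ)+1)+1) * x^(e+1) with hg
  have hderiv : ∀ x : ℝ, HasDerivAt f (g x) x := by
    intro x
    have h1 : HasDerivAt (fun x : ℝ => x + 1) 1 x := (hasDerivAt_id x).add_const 1
    have h2 := (h1.pow (e+1)).const_mul ρ
    have h3 := (hasDerivAt_pow (e+1+1) x).const_mul μ
    have := h2.sub h3
    refine this.congr_deriv ?_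
    simp [hg]
    ring
  have hgpos : ∀ x : ℝ, 0 ≤ x → x < Φ → 0 < g x := by
    intro x hx hxΦ
    have hc := core x Φ hx hxΦ
    have key : μ * (((e:ℝ)+1)+1) * x^(e+1) * Φ^(e+1) < ρ * ((e:ℝ)+1) * (x+1)^e * Φ^(e+1) := by
      have h4 : ρ * ((e:ℝ)+1) * ((Φ+1)^e * x^(e+1)) < ρ * ((e:ℝ)+1) * ((x+1)^e * Φ^(e+1)) :=
        mul_lt_mul_of_pos_left hc (by positivity)
      have h6 : μ * (((e:ℝ)+1)+1) * Φ^(e+1) * x^(e+1) = ρ * ((e:ℝ)+1) * (Φ+1)^e * x^(e+1) := by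
        rw [hμ]
      nlinarith [h4, h6]
    have h5 : μ * (((e:ℝ)+1)+1) * x^(e+1) < ρ * ((e:ℝ)+1) * (x+1)^e :=
      lt_of_mul_lt_mul_right (by linarith) hΦd.le
    simp only [hg]
    linarith
  have hgneg : ∀ x : ℝ, Φ < x → g x < 0 := by
    intro x hΦx
    have hc := core Φ x hΦpos.le hΦx
    have key : ρ * ((e:ℝ)+1) * (x+1)^e * Φ^(e+1) < μ * (((e:ℝ)+1)+1) * x^(e+1) * Φ^(e+1) := by
      have h4 : ρ * ((e:ℝ)+1) * ((x+1)^e * Φ^(e+1)) < ρ * ((e:ℝ)+1) * ((Φ+1)^e * x^(e+1)) :=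
        mul_lt_mul_of_pos_left hc (by positivity)
      have h6 : μ * (((e:ℝ)+1)+1) * Φ^(e+1) * x^(e+1) = ρ * ((e:ℝ)+1) * (Φ+1)^e * x^(e+1) := by
        rw [hμ]
      nlinarith [h4, h6]
    have h5 : ρ * ((e:ℝ)+1) * (x+1)^e < μ * (((e:ℝ)+1)+1) * x^(e+1) :=
      lt_of_mul_lt_mul_right (by linarith) hΦd.le
    simp only [hg]
    linarith
  have hcont : Continuous f :=
    (continuous_const.mul ((continuous_id.add continuous_const).pow _)).sub
      (continuous_const.mul (continuous_pow _))
  have hmono : StrictMonoOn f (Set.Icc 0 Φ) := by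
    apply strictMonoOn_of_deriv_pos (convex_Icc 0 Φ) hcont.continuousOn
    intro x hx
    rw [interior_Icc] at hx
    rw [(hderiv x).deriv]
    exact hgpos x hx.1.le hx.2
  have hanti : StrictAntiOn f (Set.Ici Φ) := by
    apply strictAntiOn_of_deriv_neg (convex_Ici Φ) hcont.continuousOn
    intro x hx
    rw [interior_Ici] at hx
    rw [(hderiv x).deriv]
    exact hgneg x hx
  constructor
  · intro x hx
    have : f x ≤ f Φ := by
      rcases lt_trichotomy x Φ with h | h | h
      · exact (hmono ⟨hx, h.le⟩ ⟨hΦpos.le, le_refl Φ⟩ h).le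
      · rw [h]
      · exact (hanti (le_refl Φ) h.le h).le
    simpa [hf] using this
  · rw [hΦ]; ring
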